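/- (Unique determination of measurements from a local correlation.) Let c = cos(π/12). Suppose a₀, a₁ ∈ ℝ³ are unit vectors and s₁, s₂, s₃, s₄ ∈ ℝ³ have ‖s_k‖ ≤ 1, with a₀·s₁ = 1, a₁·s₁ = c; a₀·s₂ = −1, a₁·s₂ = −c; a₀·s₃ = c, a₁·s₃ = 1; a₀·s₄ = −c, a₁·s₄ = −1. Then a₀·a₁ = c, s₁ = a₀, s₂ = −a₀, s₃ = a₁ and s₄ = −a₁; in particular the angle between the two measurements and all four conditional states are uniquely determined by the correlation. -/

import Mathlib

noncomputable section
open scoped ComplexOrder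

/-- Euclidean 3-space, the home of Bloch vectors and measurement directions. -/
abbrev E3 := EuclideanSpace ℝ (Fin 3)

/-- The standard inner product on ℝ³. -/
def dot (a b : E3) : ℝ := inner ℝ a b

lemma eq_of_dot_one (a s : E3) (ha : ‖a‖ = 1) (hs : ‖s‖ ≤ 1)
    (h : (inner ℝ a s : ℝ) = 1) : s = a := by
  have hexp := norm_sub_sq_real s a
  have hc : (inner ℝ s a : ℝ) = 1 := by rw [real_inner_comm]; exact h
  rw [hc, ha] at hexp
  have hn : ‖s - a‖ = 0 := by nlinarith [norm_nonneg s, norm_nonneg (s - a)]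
  have := norm_eq_zero.mp hn
  exact sub_eq_zero.mp this

lemma eq_of_dot_neg_one (a s : E3) (ha : ‖a‖ = 1) (hs : ‖s‖ ≤ 1)
    (h : (inner ℝ a s : ℝ) = -1) : s = -a := by
  have : (inner ℝ a (-s) : ℝ) = 1 := by rw [inner_neg_right, h]; ring
  have h2 := eq_of_dot_one a (-s) ha (by simpa using hs) this
  simpa [neg_eq_iff_eq_neg] using h2

/-- Unique determination of measurements and states from the paper's local Bell
correlation with conditional expectations (1, c), (−1, −c), (c, 1), (−c, −1),
where c = cos(π/12): the measurement angle is a₀·a₁ = c and the four conditional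
Bloch vectors are ±a₀, ±a₁. -/
theorem unique_determination_from_local_correlation
    (a₀ a₁ s₁ s₂ s₃ s₄ : E3)
    (ha₀ : ‖a₀‖ = 1) (ha₁ : ‖a₁‖ = 1)
    (hs₁ : ‖s₁‖ ≤ 1) (hs₂ : ‖s₂‖ ≤ 1) (hs₃ : ‖s₃‖ ≤ 1) (hs₄ : ‖s₄‖ ≤ 1)
    (h₁₀ : dot a₀ s₁ = 1) (h₁₁ : dot a₁ s₁ = Real.cos (Real.pi / 12))
    (h₂₀ : dot a₀ s₂ = -1) (h₂₁ : dot a₁ s₂ = -Real.cos (Real.pi / 12))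
    (h₃₀ : dot a₀ s₃ = Real.cos (Real.pi / 12)) (h₃₁ : dot a₁ s₃ = 1)
    (h₄₀ : dot a₀ s₄ = -Real.cos (Real.pi / 12)) (h₄₁ : dot a₁ s₄ = -1) :
    dot a₀ a₁ = Real.cos (Real.pi / 12) ∧
    s₁ = a₀ ∧ s₂ = -a₀ ∧ s₃ = a₁ ∧ s₄ = -a₁ := by
  have e₁ : s₁ = a₀ := eq_of_dot_one a₀ s₁ ha₀ hs₁ h₁₀
  have e₂ : s₂ = -a₀ := eq_of_dot_neg_one a₀ s₂ ha₀ hs₂ h₂₀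
  have e₃ : s₃ = a₁ := eq_of_dot_one a₁ s₃ ha₁ hs₃ h₃₁
  have e₄ : s₄ = -a₁ := eq_of_dot_neg_one a₁ s₄ ha₁ hs₄ h₄₁
  refine ⟨?_, e₁, e₂, e₃, e₄⟩
  rw [← e₃]; exact h₃₀
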